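/- arXiv:0812.2192 — 2 statements merged into one kernel-verified Lean document; each statement's English description precedes it below -/
import Mathlib

section
/- Let H be a maximal cyclic subgroup of the discrete Heisenberg group Γ₃ with H ≠ Z(Γ₃), where Z(Γ₃) is the center of Γ₃. Then H is a normal subgroup of its normalizer N(H), and the quotient group N(H)/H is infinite cyclic, i.e. isomorphic to ℤ. -/
/-- The discrete Heisenberg group `Γ₃`: triples `(a,b,c)` of integers, corresponding to the
upper unitriangular matrix `[[1,a,c],[0,1,b],[0,0,1]]`, with multiplication
`(a,b,c)·(a',b',c') = (a+a', b+b', c+c'+a*b')`. -/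
@[ext]
structure Heisenberg where
  a : ℤ
  b : ℤ
  c : ℤ

namespace Heisenberg

instance : Mul Heisenberg :=
  ⟨fun x y => ⟨x.a + y.a, x.b + y.b, x.c + y.c + x.a * y.b⟩⟩

instance : One Heisenberg := ⟨⟨0, 0, 0⟩⟩

instance : Inv Heisenberg := ⟨fun x => ⟨-x.a, -x.b, -x.c + x.a * x.b⟩⟩

theorem mul_def (x y : Heisenberg) :
    x * y = ⟨x.a + y.a, x.b + y.b, x.c + y.c + x.a * y.b⟩ := rfl

theorem one_def : (1 : Heisenberg) = ⟨0, 0, 0⟩ := rfl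

theorem inv_def (x : Heisenberg) : x⁻¹ = ⟨-x.a, -x.b, -x.c + x.a * x.b⟩ := rfl

instance : Group Heisenberg where
  mul_assoc x y z := by ext <;> simp [mul_def] <;> ring
  one_mul x := by ext <;> simp [mul_def, one_def]
  mul_one x := by ext <;> simp [mul_def, one_def]
  inv_mul_cancel x := by ext <;> simp [mul_def, inv_def, one_def]

end Heisenberg

/-- `H` is a maximal cyclic subgroup of `G`: `H` is cyclic and maximal with respect to
inclusion among cyclic subgroups of `G`. -/
def IsMaximalCyclic {G : Type*} [Group G] (H : Subgroup G) : Prop :=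
  IsCyclic H ∧ ∀ K : Subgroup G, IsCyclic K → H ≤ K → K = H

namespace Heisenberg

def T (n : ℤ) : ℤ := n * (n - 1) / 2

lemma two_dvd_aux (n : ℤ) : 2 ∣ n * (n - 1) := by
  rcases Int.even_or_odd n with ⟨k, hk⟩ | ⟨k, hk⟩ <;> subst hk
  · exact ⟨k * (k + k - 1), by ring⟩
  · exact ⟨(2 * k + 1) * k, by ring⟩

lemma two_T (n : ℤ) : 2 * T n = n * (n - 1) := by
  rw [T, Int.mul_ediv_cancel' (two_dvd_aux n)]

lemma T_zero : T 0 = 0 := by decide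
lemma T_one : T 1 = 0 := by decide

lemma T_add (a b : ℤ) : T (a + b) = T a + T b + a * b := by
  have key : 2 * T (a + b) = 2 * (T a + T b + a * b) := by
    rw [two_T]; linear_combination - two_T a - two_T b
  exact mul_left_cancel₀ (by norm_num : (2:ℤ) ≠ 0) key

lemma T_mul (a b : ℤ) : T (a * b) = b ^ 2 * T a + a * T b := by
  have key : 2 * T (a * b) = 2 * (b ^ 2 * T a + a * T b) := by
    rw [two_T]; linear_combination (-(b^2)) * (two_T a) - a * (two_T b)
  exact mul_left_cancel₀ (by norm_num : (2:ℤ) ≠ 0) key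

lemma zpow_eq (g : Heisenberg) (n : ℤ) :
    g ^ n = ⟨n * g.a, n * g.b, n * g.c + g.a * g.b * T n⟩ := by
  induction n using Int.induction_on with
  | zero => ext <;> simp [one_def, T_zero]
  | succ k ih =>
    have ht : T ((k : ℤ) + 1) = T (k : ℤ) + k := by
      have := T_add (k : ℤ) 1; simp [T_one] at this; linarith
    rw [zpow_add_one, ih, mul_def]
    ext <;> simp [ht] <;> ring
  | pred k ih =>
    have ht : T (-(k : ℤ) - 1) = T (-(k:ℤ)) + k + 1 := by
      have := T_add (-(k : ℤ) - 1) 1; simp [T_one] at this; linarith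
    rw [show -(k:ℤ) - 1 = -(k:ℤ) - 1 from rfl, zpow_sub_one, ih, inv_def, mul_def]
    ext <;> simp [ht] <;> ring

lemma conj_eq (x h : Heisenberg) :
    x * h * x⁻¹ = ⟨h.a, h.b, h.c + x.a * h.b - x.b * h.a⟩ := by
  ext <;> simp [mul_def, inv_def] <;> ring

lemma mem_center_iff' (x : Heisenberg) :
    x ∈ Subgroup.center Heisenberg ↔ x.a = 0 ∧ x.b = 0 := by
  rw [Subgroup.mem_center_iff]
  constructor
  · intro h
    have h1 := congrArg Heisenberg.c (h ⟨1, 0, 0⟩)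
    have h2 := congrArg Heisenberg.c (h ⟨0, 1, 0⟩)
    simp [mul_def] at h1 h2
    constructor <;> linarith
  · rintro ⟨ha, hb⟩ y
    ext <;> simp [mul_def, ha, hb] <;> ring

lemma eq_zpowers {G : Type*} [Group G] {H : Subgroup G} (g : H)
    (hg : ∀ x : H, x ∈ Subgroup.zpowers g) : H = Subgroup.zpowers (g : G) := by
  ext x
  rw [Subgroup.mem_zpowers_iff]
  constructor
  · intro hx
    obtain ⟨n, hn⟩ := Subgroup.mem_zpowers_iff.mp (hg ⟨x, hx⟩)
    exact ⟨n, by simpa using congrArg Subtype.val hn⟩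
  · rintro ⟨n, rfl⟩
    exact zpow_mem g.2 n

lemma isCyclic_zpowers {G : Type*} [Group G] (u : G) : IsCyclic (Subgroup.zpowers u) := by
  refine ⟨⟨⟨u, Subgroup.mem_zpowers u⟩, ?_⟩⟩
  rintro ⟨x, hx⟩
  obtain ⟨k, hk⟩ := Subgroup.mem_zpowers_iff.mp hx
  exact ⟨k, Subtype.ext (by simpa using hk)⟩

section aux
variable (p q p' q' : ℤ)

def kf (x : Heisenberg) : ℤ := x.a * p' + x.b * q'

def sf (x : Heisenberg) : ℤ := x.c - p * q * T (kf p' q' x)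

def Cond (x : Heisenberg) : Prop := x.a * q = x.b * p

variable {p q p' q'}

lemma cond_zpow {x : Heisenberg} (hx : Cond p q x) (n : ℤ) : Cond p q (x ^ n) := by
  simp only [Cond, zpow_eq] at *
  linear_combination n * hx

lemma coord_a (hbez : p * p' + q * q' = 1) {x : Heisenberg} (hx : Cond p q x) :
    x.a = kf p' q' x * p := by
  simp only [Cond] at hx; simp only [kf]
  linear_combination q' * hx - x.a * hbez

lemma coord_b (hbez : p * p' + q * q' = 1) {x : Heisenberg} (hx : Cond p q x) :
    x.b = kf p' q' x * q := by
  simp only [Cond] at hx; simp only [kf]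
  linear_combination -p' * hx - x.b * hbez

lemma kf_mul (x y : Heisenberg) : kf p' q' (x * y) = kf p' q' x + kf p' q' y := by
  simp only [kf, mul_def]; ring

lemma kf_zpow (x : Heisenberg) (n : ℤ) : kf p' q' (x ^ n) = n * kf p' q' x := by
  simp only [kf, zpow_eq]; ring

lemma sf_mul (hbez : p * p' + q * q' = 1) {x y : Heisenberg}
    (hx : Cond p q x) (hy : Cond p q y) :
    sf p q p' q' (x * y) = sf p q p' q' x + sf p q p' q' y := by
  have h1 := coord_a hbez hx
  have h2 := coord_b hbez hy
  simp only [sf, kf_mul, T_add]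
  simp only [mul_def]
  linear_combination y.b * h1 + (p * kf p' q' x) * h2

lemma sf_zpow (hbez : p * p' + q * q' = 1) {x : Heisenberg} (hx : Cond p q x) (n : ℤ) :
    sf p q p' q' (x ^ n) = n * sf p q p' q' x := by
  have h1 := coord_a hbez hx
  have h2 := coord_b hbez hx
  simp only [sf, kf_zpow, T_mul]
  simp only [zpow_eq]
  linear_combination (T n * x.b) * h1 + (T n * (kf p' q' x) * p) * h2

lemma recon (hbez : p * p' + q * q' = 1) {x : Heisenberg} (hx : Cond p q x) :
    x = ⟨kf p' q' x * p, kf p' q' x * q, sf p q p' q' x + p * q * T (kf p' q' x)⟩ := by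
  ext
  · exact coord_a hbez hx
  · exact coord_b hbez hx
  · simp [sf]

end aux

end Heisenberg

open Heisenberg

/-- For a maximal cyclic subgroup `H ≠ Z(Γ₃)` of the discrete Heisenberg group `Γ₃`,
`H` is normal in its normalizer `N(H)` and the quotient `N(H)/H` is infinite cyclic,
i.e. isomorphic to `ℤ`. -/
theorem heisenberg_normalizer_quotient (H : Subgroup Heisenberg)
    (hmax : IsMaximalCyclic H) (hne : H ≠ Subgroup.center Heisenberg) :
    (H.subgroupOf (Subgroup.normalizer (H : Set Heisenberg))).Normal ∧
      Nonempty (((Subgroup.normalizer (H : Set Heisenberg)) ⧸ H.subgroupOf (Subgroup.normalizer (H : Set Heisenberg))) ≃* Multiplicative ℤ) := by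
  obtain ⟨⟨g₀, hgen⟩⟩ := hmax.1
  set g : Heisenberg := (g₀ : Heisenberg) with hgdef
  have hH : H = Subgroup.zpowers g := eq_zpowers g₀ hgen
  -- g is not central
  have hab : ¬ (g.a = 0 ∧ g.b = 0) := by
    rintro ⟨hga, hgb⟩
    have hz : H ≤ Subgroup.zpowers (⟨0, 0, 1⟩ : Heisenberg) := by
      rw [hH, Subgroup.zpowers_le]
      refine ⟨g.c, ?_⟩
      show (⟨0, 0, 1⟩ : Heisenberg) ^ (g.c) = g
      rw [zpow_eq]; ext <;> simp [hga, hgb]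
    have heq := hmax.2 _ (isCyclic_zpowers _) hz
    apply hne
    rw [← heq]
    ext x
    rw [Subgroup.mem_zpowers_iff, mem_center_iff']
    constructor
    · rintro ⟨k, rfl⟩; rw [zpow_eq]; simp
    · rintro ⟨hxa, hxb⟩
      refine ⟨x.c, ?_⟩
      show (⟨0, 0, 1⟩ : Heisenberg) ^ (x.c) = x
      rw [zpow_eq]; ext <;> simp [hxa, hxb]
  -- gcd setup
  set m : ℤ := (Int.gcd g.a g.b : ℤ) with hmdef
  have hgcd0 : Int.gcd g.a g.b ≠ 0 := fun h => hab (Int.gcd_eq_zero_iff.mp h)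
  have hm : m ≠ 0 := by rw [hmdef]; exact_mod_cast hgcd0
  set p : ℤ := g.a / m with hpdef
  set q : ℤ := g.b / m with hqdef
  have ha : g.a = m * p := (Int.mul_ediv_cancel' (Int.gcd_dvd_left _ _)).symm
  have hq : g.b = m * q := (Int.mul_ediv_cancel' (Int.gcd_dvd_right _ _)).symm
  have hcop : Int.gcd p q = 1 := Int.gcd_div_gcd_div_gcd (Nat.pos_of_ne_zero hgcd0)
  obtain ⟨a', b', hbez0⟩ := Int.isCoprime_iff_gcd_eq_one.mpr hcop
  set p' : ℤ := a' with hp'def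
  set q' : ℤ := b' with hq'def
  have hbez : p * p' + q * q' = 1 := by linarith
  have hcondg : Cond p q g := by
    show g.a * q = g.b * p
    linear_combination q * ha - p * hq
  have hkg : kf p' q' g = m := by
    show g.a * p' + g.b * q' = m
    linear_combination p' * ha + q' * hq + m * hbez
  set s₀ : ℤ := sf p q p' q' g with hs0
  -- normalizer characterization
  have hnorm : ∀ x : Heisenberg, x ∈ (Subgroup.normalizer (H : Set Heisenberg)) ↔ x.a * g.b = x.b * g.a := by
    intro x
    rw [Subgroup.mem_normalizer_iff]
    constructor
    · intro hx
      have hg_mem : g ∈ H := hH ▸ Subgroup.mem_zpowers g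
      have h2 : x * g * x⁻¹ ∈ H := (hx g).mp hg_mem
      rw [hH, Subgroup.mem_zpowers_iff] at h2
      obtain ⟨n, hn⟩ := h2
      rw [conj_eq, zpow_eq] at hn
      have e1 : n * g.a = g.a := congrArg Heisenberg.a hn
      have e2 : n * g.b = g.b := congrArg Heisenberg.b hn
      have e3 : n * g.c + g.a * g.b * T n = g.c + x.a * g.b - x.b * g.a :=
        congrArg Heisenberg.c hn
      have hn1 : n = 1 := by
        rcases not_and_or.mp hab with h | h
        · have h5 : (n - 1) * g.a = 0 := by linear_combination e1
          rcases mul_eq_zero.mp h5 with h6 | h6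
          · linarith
          · exact absurd h6 h
        · have h5 : (n - 1) * g.b = 0 := by linear_combination e2
          rcases mul_eq_zero.mp h5 with h6 | h6
          · linarith
          · exact absurd h6 h
      rw [hn1] at e3
      simp [T_one] at e3
      linarith
    · intro hx
      have key : ∀ y : Heisenberg, y.a * g.b = y.b * g.a → ∀ h ∈ H, y * h * y⁻¹ = h := by
        intro y hy h hh
        rw [hH, Subgroup.mem_zpowers_iff] at hh
        obtain ⟨n, rfl⟩ := hh
        rw [conj_eq, zpow_eq]
        ext
        · rfl
        · rfl
        · show n * g.c + g.a * g.b * T n + y.a * (n * g.b) - y.b * (n * g.a)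
              = n * g.c + g.a * g.b * T n
          linear_combination n * hy
      intro h
      constructor
      · intro hh; rw [key x hx h hh]; exact hh
      · intro hh
        have hxinv : (x⁻¹).a * g.b = (x⁻¹).b * g.a := by
          rw [inv_def]; show -x.a * g.b = -x.b * g.a; linear_combination -hx
        have h2 := key x⁻¹ hxinv _ hh
        have h3 : h = x * h * x⁻¹ := by
          have := h2
          rw [inv_inv] at this
          calc h = x⁻¹ * (x * h * x⁻¹) * x := by group
          _ = x * h * x⁻¹ := this
        rw [h3]; exact hh
  have hcondN : ∀ x : Heisenberg, x ∈ (Subgroup.normalizer (H : Set Heisenberg)) → Cond p q x := by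
    intro x hx
    have h1 := (hnorm x).mp hx
    have h2 : m * (x.a * q - x.b * p) = 0 := by
      linear_combination h1 - x.a * hq + x.b * ha
    have h3 : x.a * q - x.b * p = 0 := by
      rcases mul_eq_zero.mp h2 with h | h
      · exact absurd h hm
      · exact h
    show x.a * q = x.b * p
    linarith
  -- coprimality of m and s₀ via maximality
  have hcop2 : Int.gcd m s₀ = 1 := by
    set d : ℤ := (Int.gcd m s₀ : ℤ) with hddef
    have hdgcd0 : Int.gcd m s₀ ≠ 0 := fun h => hm (Int.gcd_eq_zero_iff.mp h).1
    have hd0 : d ≠ 0 := by rw [hddef]; exact_mod_cast hdgcd0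
    set k₁ : ℤ := m / d with hk1def
    set s₁ : ℤ := s₀ / d with hs1def
    have hk1 : m = d * k₁ := (Int.mul_ediv_cancel' (Int.gcd_dvd_left _ _)).symm
    have hs1 : s₀ = d * s₁ := (Int.mul_ediv_cancel' (Int.gcd_dvd_right _ _)).symm
    set u : Heisenberg := ⟨k₁ * p, k₁ * q, s₁ + p * q * T k₁⟩ with hu
    have hcondu : Cond p q u := by show k₁ * p * q = k₁ * q * p; ring
    have hku : kf p' q' u = k₁ := by
      show k₁ * p * p' + k₁ * q * q' = k₁
      linear_combination k₁ * hbez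
    have hsu : sf p q p' q' u = s₁ := by
      show u.c - p * q * T (kf p' q' u) = s₁
      rw [hku]
      show s₁ + p * q * T k₁ - p * q * T k₁ = s₁
      ring
    have hud : u ^ d = g := by
      have c1 : Cond p q (u ^ d) := cond_zpow hcondu d
      have r1 := recon hbez c1
      have r2 := recon hbez hcondg
      rw [r1, r2, kf_zpow, sf_zpow hbez hcondu, hku, hsu, hkg, ← hs0, hk1, hs1]
    have hle : H ≤ Subgroup.zpowers u := by
      rw [hH, Subgroup.zpowers_le]
      exact ⟨d, hud⟩
    have heq := hmax.2 _ (isCyclic_zpowers u) hle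
    have hu_mem : u ∈ H := heq ▸ Subgroup.mem_zpowers u
    rw [hH, Subgroup.mem_zpowers_iff] at hu_mem
    obtain ⟨n, hn⟩ := hu_mem
    have hnm : n * m = k₁ := by
      have h5 := congrArg (kf p' q') hn
      rw [kf_zpow, hkg, hku] at h5
      exact h5
    have hk10 : k₁ ≠ 0 := fun h => hm (by rw [hk1, h, mul_zero])
    have h6 : (n * d - 1) * k₁ = 0 := by linear_combination hnm - n * hk1
    have hnd : n * d = 1 := by
      rcases mul_eq_zero.mp h6 with h | h
      · linarith
      · exact absurd h hk10
    have hdpos : (0 : ℤ) ≤ d := by rw [hddef]; exact Int.natCast_nonneg _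
    have hd1 : d = 1 := Int.eq_one_of_dvd_one hdpos ⟨n, by linarith⟩
    have : ((Int.gcd m s₀ : ℤ)) = 1 := hddef ▸ hd1
    exact_mod_cast this
  obtain ⟨u', v', hbez2⟩ := Int.isCoprime_iff_gcd_eq_one.mpr hcop2
  -- the homomorphism φ : N(H) → Multiplicative ℤ
  refine ⟨Subgroup.normal_in_normalizer, ?_⟩
  let φ : (Subgroup.normalizer (H : Set Heisenberg)) →* Multiplicative ℤ :=
  { toFun := fun x => Multiplicative.ofAdd (s₀ * kf p' q' x.val - m * sf p q p' q' x.val)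
    map_one' := by
      have : kf p' q' (1 : Heisenberg) = 0 := by simp [kf, one_def]
      have h2 : sf p q p' q' (1 : Heisenberg) = 0 := by
        simp [sf, kf, one_def, T_zero]
      show Multiplicative.ofAdd (s₀ * kf p' q' (1:Heisenberg) - m * sf p q p' q' (1:Heisenberg)) = 1
      rw [this, h2]; simp
    map_mul' := fun x y => by
      have hx := hcondN x.val x.2
      have hy := hcondN y.val y.2
      show Multiplicative.ofAdd (s₀ * kf p' q' (x.val * y.val) - m * sf p q p' q' (x.val * y.val)) = _
      rw [kf_mul, sf_mul hbez hx hy, ← ofAdd_add]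
      congr 1
      ring }
  have hker : φ.ker = H.subgroupOf (Subgroup.normalizer (H : Set Heisenberg)) := by
    ext x
    simp only [MonoidHom.mem_ker, Subgroup.mem_subgroupOf]
    have hcx := hcondN x.val x.2
    constructor
    · intro hx0
      have hx0' : s₀ * kf p' q' x.val - m * sf p q p' q' x.val = 0 := by
        have : Multiplicative.ofAdd (s₀ * kf p' q' x.val - m * sf p q p' q' x.val) = 1 := hx0
        rwa [ofAdd_eq_one] at this
      have hdvd : m ∣ kf p' q' x.val := by
        have hco : IsCoprime m s₀ := Int.isCoprime_iff_gcd_eq_one.mpr hcop2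
        have h7 : m ∣ s₀ * kf p' q' x.val := ⟨sf p q p' q' x.val, by linarith⟩
        exact hco.dvd_of_dvd_mul_left h7
      obtain ⟨n, hn⟩ := hdvd
      have hsx : sf p q p' q' x.val = n * s₀ := by
        have h8 : m * (sf p q p' q' x.val - n * s₀) = 0 := by
          linear_combination s₀ * hn - hx0'
        rcases mul_eq_zero.mp h8 with h | h
        · exact absurd h hm
        · linarith
      refine (le_of_eq hH.symm) (Subgroup.mem_zpowers_iff.mpr ⟨n, ?_⟩)
      show g ^ n = (x : Heisenberg)
      have c1 : Cond p q (g ^ n) := cond_zpow hcondg n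
      rw [recon hbez c1, recon hbez hcx, kf_zpow, sf_zpow hbez hcondg, hkg, ← hs0, hsx, hn]
      ext <;> dsimp only <;> ring_nf
    · intro hxH
      have hxH2 : (x : Heisenberg) ∈ Subgroup.zpowers g := (le_of_eq hH) hxH
      obtain ⟨n, hn⟩ := Subgroup.mem_zpowers_iff.mp hxH2
      have hn' : g ^ n = (x : Heisenberg) := hn
      have h1 : kf p' q' x.val = n * m := by rw [← hn', kf_zpow, hkg]
      have h2 : sf p q p' q' x.val = n * s₀ := by
        rw [← hn', sf_zpow hbez hcondg, hs0]
      show Multiplicative.ofAdd (s₀ * kf p' q' x.val - m * sf p q p' q' x.val) = 1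
      rw [h1, h2, ofAdd_eq_one]
      ring
  have hsurj : Function.Surjective φ := by
    set x₀ : Heisenberg := ⟨v' * p, v' * q, -u' + p * q * T v'⟩ with hx0def
    have hcx : Cond p q x₀ := by show v' * p * q = v' * q * p; ring
    have hxN : x₀ ∈ (Subgroup.normalizer (H : Set Heisenberg)) := by
      rw [hnorm]
      show v' * p * g.b = v' * q * g.a
      rw [ha, hq]; ring
    have hk : kf p' q' x₀ = v' := by
      show v' * p * p' + v' * q * q' = v'
      linear_combination v' * hbez
    have hs : sf p q p' q' x₀ = -u' := by
      show x₀.c - p * q * T (kf p' q' x₀) = -u'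
      rw [hk]
      show -u' + p * q * T v' - p * q * T v' = -u'
      ring
    have hφ : φ ⟨x₀, hxN⟩ = Multiplicative.ofAdd 1 := by
      show Multiplicative.ofAdd (s₀ * kf p' q' x₀ - m * sf p q p' q' x₀) = _
      rw [hk, hs]
      congr 1
      linear_combination hbez2
    intro t
    refine ⟨(⟨x₀, hxN⟩ : (Subgroup.normalizer (H : Set Heisenberg))) ^ (Multiplicative.toAdd t), ?_⟩
    rw [map_zpow, hφ, ← ofAdd_zsmul]
    simp
  exact ⟨(QuotientGroup.quotientMulEquivOfEq hker.symm).trans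
    (QuotientGroup.quotientKerEquivOfSurjective φ hsurj)⟩
end

section
/- Let H be a maximal cyclic subgroup of the discrete Heisenberg group Γ₃ with H ≠ Z(Γ₃), where Z(Γ₃) is the center. Consider the action of Γ₃ on ℝ² given by γ·(x,y) = (x+a, y+b) for γ = [[1,a,c],[0,1,b],[0,0,1]]. Then there is exactly one one-dimensional ℝ-linear subspace L of ℝ² that is invariant under H (i.e. γ·p ∈ L for all γ ∈ H and p ∈ L); moreover this same line L is invariant under the whole normalizer N(H) of H in Γ₃. -/
/-- The action of `γ = (a,b,c) ∈ Γ₃` on `ℝ²` by `γ·(x,y) = (x+a, y+b)`. -/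
def heisenbergAct (γ : Heisenberg) (p : ℝ × ℝ) : ℝ × ℝ :=
  (p.1 + (γ.a : ℝ), p.2 + (γ.b : ℝ))


section Aux

theorem Heisenberg.zpow_a (g : Heisenberg) (k : ℤ) : (g ^ k).a = k * g.a := by
  let f : Heisenberg →* Multiplicative ℤ :=
    { toFun := fun x => Multiplicative.ofAdd x.a
      map_one' := rfl
      map_mul' := fun x y => rfl }
  have h := map_zpow f g k
  have h2 : Multiplicative.toAdd (f (g ^ k)) = (g ^ k).a := rfl
  rw [h] at h2
  simpa [f, mul_comm] using h2.symm

theorem Heisenberg.zpow_b (g : Heisenberg) (k : ℤ) : (g ^ k).b = k * g.b := by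
  let f : Heisenberg →* Multiplicative ℤ :=
    { toFun := fun x => Multiplicative.ofAdd x.b
      map_one' := rfl
      map_mul' := fun x y => rfl }
  have h := map_zpow f g k
  have h2 : Multiplicative.toAdd (f (g ^ k)) = (g ^ k).b := rfl
  rw [h] at h2
  simpa [f, mul_comm] using h2.symm

theorem isCyclic_zpowers {G : Type*} [Group G] (g : G) :
    IsCyclic (Subgroup.zpowers g) := by
  refine ⟨⟨⟨g, Subgroup.mem_zpowers g⟩, fun x => ?_⟩⟩
  obtain ⟨k, hk⟩ := x.2
  exact ⟨k, by ext; simpa using hk⟩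

theorem Heisenberg.mem_center_iff'_s13 (x : Heisenberg) :
    x ∈ Subgroup.center Heisenberg ↔ x.a = 0 ∧ x.b = 0 := by
  rw [Subgroup.mem_center_iff]
  constructor
  · intro h
    have h1 := h ⟨0, 1, 0⟩
    have h2 := h ⟨1, 0, 0⟩
    simp [Heisenberg.mul_def, Heisenberg.ext_iff] at h1 h2
    omega
  · intro ⟨ha, hb⟩ y
    ext <;> simp [Heisenberg.mul_def, ha, hb] <;> ring

theorem Heisenberg.center_cyclic : IsCyclic (Subgroup.center Heisenberg) := by
  have : Subgroup.center Heisenberg = Subgroup.zpowers (⟨0, 0, 1⟩ : Heisenberg) := by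
    have key : ∀ k : ℤ, (⟨0, 0, 1⟩ : Heisenberg) ^ k = ⟨0, 0, k⟩ := by
      intro k
      induction k using Int.induction_on with
      | zero => rfl
      | succ n ih => rw [zpow_add_one, ih]; ext <;> simp [Heisenberg.mul_def]
      | pred n ih =>
          rw [zpow_sub_one, ih]
          ext <;> simp [Heisenberg.mul_def, Heisenberg.inv_def, sub_eq_add_neg]
    ext x
    rw [Heisenberg.mem_center_iff'_s13, Subgroup.mem_zpowers_iff]
    constructor
    · intro ⟨ha, hb⟩
      exact ⟨x.c, by rw [key]; ext <;> simp [ha, hb]⟩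
    · intro ⟨k, hk⟩
      rw [key] at hk
      constructor <;> rw [← hk]
  rw [this]
  exact isCyclic_zpowers _

end Aux


/-- For a maximal cyclic subgroup `H ≠ Z(Γ₃)` of the discrete Heisenberg group `Γ₃`,
acting on `ℝ²` by `γ·(x,y) = (x+a, y+b)`: there is exactly one one-dimensional linear
subspace `L` of `ℝ²` invariant under `H`, and any such line is moreover invariant under
the whole normalizer `N(H)`. -/
theorem heisenberg_invariant_line (H : Subgroup Heisenberg)
    (hmax : IsMaximalCyclic H) (hne : H ≠ Subgroup.center Heisenberg) :
    (∃! L : Submodule ℝ (ℝ × ℝ),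
      Module.finrank ℝ L = 1 ∧ ∀ γ ∈ H, ∀ p ∈ L, heisenbergAct γ p ∈ L) ∧
    (∀ L : Submodule ℝ (ℝ × ℝ),
      (Module.finrank ℝ L = 1 ∧ ∀ γ ∈ H, ∀ p ∈ L, heisenbergAct γ p ∈ L) →
      ∀ γ ∈ Subgroup.normalizer (H : Set Heisenberg), ∀ p ∈ L, heisenbergAct γ p ∈ L) := by
  obtain ⟨hcy, hmaxi⟩ := hmax
  -- get a generator g of H
  obtain ⟨⟨g, hgH⟩, hgen⟩ := hcy.exists_generator
  have hHg : H = Subgroup.zpowers g := by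
    ext x
    constructor
    · intro hx
      obtain ⟨k, hk⟩ := hgen ⟨x, hx⟩
      exact ⟨k, by simpa using congrArg Subtype.val hk⟩
    · rintro ⟨k, rfl⟩
      exact Subgroup.zpow_mem H hgH k
  -- g is not central : (g.a, g.b) ≠ (0,0)
  have hab : ¬(g.a = 0 ∧ g.b = 0) := by
    rintro ⟨ha, hb⟩
    apply hne
    refine (hmaxi (Subgroup.center Heisenberg) Heisenberg.center_cyclic ?_).symm
    rw [hHg]
    rintro x ⟨k, rfl⟩
    rw [Heisenberg.mem_center_iff'_s13, Heisenberg.zpow_a, Heisenberg.zpow_b, ha, hb]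
    simp
  set v : ℝ × ℝ := ((g.a : ℝ), (g.b : ℝ)) with hv
  have hv0 : v ≠ 0 := by
    simp only [hv, Prod.ext_iff, Prod.fst_zero, Prod.snd_zero, ne_eq, not_and_or]
    rcases not_and_or.mp hab with h | h
    · exact Or.inl (by exact_mod_cast h)
    · exact Or.inr (by exact_mod_cast h)
  set L0 : Submodule ℝ (ℝ × ℝ) := Submodule.span ℝ {v} with hL0
  have act_eq : ∀ (γ : Heisenberg) (p : ℝ × ℝ),
      heisenbergAct γ p = p + ((γ.a : ℝ), (γ.b : ℝ)) := fun γ p => rfl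
  -- L0 satisfies the property
  have hL0prop : Module.finrank ℝ L0 = 1 ∧ ∀ γ ∈ H, ∀ p ∈ L0, heisenbergAct γ p ∈ L0 := by
    refine ⟨finrank_span_singleton hv0, ?_⟩
    intro γ hγ p hp
    rw [hHg] at hγ
    obtain ⟨k, rfl⟩ := hγ
    rw [act_eq]
    refine L0.add_mem hp ?_
    rw [hL0]
    exact Submodule.mem_span_singleton.mpr
      ⟨(k : ℝ), by rw [hv]; ext <;> push_cast [Heisenberg.zpow_a, Heisenberg.zpow_b] <;> simp⟩
  -- any L with the property equals L0
  have huniq : ∀ L : Submodule ℝ (ℝ × ℝ),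
      (Module.finrank ℝ L = 1 ∧ ∀ γ ∈ H, ∀ p ∈ L, heisenbergAct γ p ∈ L) → L = L0 := by
    intro L ⟨hr, hinv⟩
    have hvL : v ∈ L := by
      have := hinv g hgH 0 L.zero_mem
      rw [act_eq] at this
      simpa using this
    have hle : L0 ≤ L := by
      rw [hL0]
      exact Submodule.span_le.mpr (Set.singleton_subset_iff.mpr hvL)
    exact (Submodule.eq_of_le_of_finrank_eq hle (by rw [hr, hL0prop.1])).symm
  constructor
  · exact ⟨L0, hL0prop, huniq⟩
  · intro L hL γ hγ p hp
    rw [huniq L hL] at hp ⊢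
    rw [act_eq]
    refine L0.add_mem hp ?_
    -- γ normalizes H, so γ g γ⁻¹ ∈ H
    have hconj : γ * g * γ⁻¹ ∈ H := (Subgroup.mem_normalizer_iff.mp hγ g).mp hgH
    rw [hHg] at hconj
    obtain ⟨k, hk'⟩ := hconj
    have hk : g ^ k = γ * g * γ⁻¹ := hk'
    -- compute components of the conjugate
    have hca : (γ * g * γ⁻¹).a = g.a := by
      simp [Heisenberg.mul_def, Heisenberg.inv_def]
    have hcb : (γ * g * γ⁻¹).b = g.b := by
      simp [Heisenberg.mul_def, Heisenberg.inv_def]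
    have hcc : (γ * g * γ⁻¹).c = g.c + γ.a * g.b - g.a * γ.b := by
      simp [Heisenberg.mul_def, Heisenberg.inv_def]; ring
    have hka : k * g.a = g.a := by rw [← Heisenberg.zpow_a g k, hk, hca]
    have hkb : k * g.b = g.b := by rw [← Heisenberg.zpow_b g k, hk, hcb]
    have hk1 : k = 1 := by
      rcases not_and_or.mp hab with h | h
      · exact mul_right_cancel₀ h (by rw [hka, one_mul])
      · exact mul_right_cancel₀ h (by rw [hkb, one_mul])
    have hrel : γ.a * g.b = g.a * γ.b := by
      rw [hk1, zpow_one] at hk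
      have := congrArg Heisenberg.c hk
      rw [hcc] at this
      omega
    rw [hL0]
    apply Submodule.mem_span_singleton.mpr
    rcases not_and_or.mp hab with h | h
    · refine ⟨(γ.a : ℝ) / (g.a : ℝ), ?_⟩
      have hga : (g.a : ℝ) ≠ 0 := by exact_mod_cast h
      rw [hv]
      ext
      · simp [div_mul_cancel₀, hga]
      · simp only [Prod.smul_snd, smul_eq_mul]
        have hrelR : (γ.a : ℝ) * g.b = (g.a : ℝ) * γ.b := by exact_mod_cast hrel
        field_simp
        linear_combination hrelR
    · refine ⟨(γ.b : ℝ) / (g.b : ℝ), ?_⟩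
      have hgb : (g.b : ℝ) ≠ 0 := by exact_mod_cast h
      rw [hv]
      ext
      · simp only [Prod.smul_fst, smul_eq_mul]
        have hrelR : (γ.a : ℝ) * g.b = (g.a : ℝ) * γ.b := by exact_mod_cast hrel
        field_simp
        linear_combination -hrelR
      · simp [div_mul_cancel₀, hgb]
end
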